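/- arXiv:1910.00921 — 3 statements merged into one kernel-verified Lean document; each statement's English description precedes it below -/
import Mathlib

section
/- Let ι be a finite index set of mesh cells, m : ι → ℝ with m K > 0 for each K, T : ι → ι → ℝ symmetric with T K L ≥ 0 and T K K = 0, b : ι → ℝ with b K ≥ 0, a : ι → ℝ, Δt > 0 and p > 0. If (y0, y1) is a scheme step, then: (i) if a K = 0 for all K, the discrete mass is conserved: Σ_K m K·|y1 K|² = Σ_K m K·|y0 K|²; (ii) if a K ≥ 0 for all K, the discrete mass is nonincreasing: Σ_K m K·|y1 K|² ≤ Σ_K m K·|y0 K|². -/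
private lemma aux_imA (mk dt : ℝ) (z0 z1 : ℂ) :
    ((starRingEnd ℂ (z1 + z0)) * (Complex.I * (mk:ℂ) * (z1 - z0) / (dt:ℂ))).im
      = mk * (‖z1‖ ^ 2 - ‖z0‖ ^ 2) / dt := by
  rw [Complex.sq_norm, Complex.sq_norm]
  simp [Complex.div_im, Complex.mul_im, Complex.mul_re, Complex.normSq_apply]
  by_cases h : dt = 0
  · simp [h]
  · field_simp
    ring

private lemma aux_imT (t : ℝ) (u v : ℂ) :
    ((starRingEnd ℂ u) * ((t:ℂ) * (v / 2 - u / 2))).im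
      = -(((starRingEnd ℂ v) * ((t:ℂ) * (u / 2 - v / 2))).im) := by
  simp [Complex.mul_im, Complex.mul_re, Complex.div_im, Complex.div_re, Complex.normSq_apply]
  ring

private lemma aux_imB (bk : ℝ) (w : ℂ) :
    ((starRingEnd ℂ w) * ((bk:ℂ) * w / 2)).im = 0 := by
  simp [Complex.div_im, Complex.mul_im, Complex.mul_re, Complex.normSq_apply]
  ring

private lemma aux_imC (c1 c2 : ℝ) (w : ℂ) :
    ((starRingEnd ℂ w) * ((c1:ℂ) * (c2:ℂ) * w)).im = 0 := by
  simp [Complex.mul_im, Complex.mul_re]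
  ring

private lemma aux_imE (mk ak : ℝ) (w : ℂ) :
    ((starRingEnd ℂ w) * (Complex.I * (mk:ℂ) * (ak:ℂ) * w / 2)).im
      = mk * ak * ‖w‖ ^ 2 / 2 := by
  rw [Complex.sq_norm]
  simp [Complex.div_im, Complex.mul_im, Complex.mul_re, Complex.normSq_apply]
  ring

/-- Mass conservation (no damping) and mass dissipation (nonnegative damping)
for one step of the finite-volume scheme for the damped defocusing NLS. -/
theorem discrete_mass_conservation_and_dissipation {ι : Type*} [Fintype ι]
    (m : ι → ℝ) (hm : ∀ K, 0 < m K)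
    (T : ι → ι → ℝ) (hTsymm : ∀ K L, T K L = T L K)
    (hTnonneg : ∀ K L, 0 ≤ T K L) (hTdiag : ∀ K, T K K = 0)
    (b : ι → ℝ) (hb : ∀ K, 0 ≤ b K)
    (a : ι → ℝ)
    (Δt : ℝ) (hΔt : 0 < Δt) (p : ℝ) (hp : 0 < p)
    (y0 y1 : ι → ℂ)
    (hscheme : ∀ K : ι,
      Complex.I * (m K : ℂ) * (y1 K - y0 K) / (Δt : ℂ)
        + ∑ L : ι, (T K L : ℂ) * ((y1 L + y0 L) / 2 - (y1 K + y0 K) / 2)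
        - (b K : ℂ) * (y1 K + y0 K) / 2
        - ((m K / (2 * p) : ℝ) : ℂ)
            * (((‖y1 K‖ ^ (2 * p) - ‖y0 K‖ ^ (2 * p)) /
                (‖y1 K‖ ^ 2 - ‖y0 K‖ ^ 2) : ℝ) : ℂ)
            * (y1 K + y0 K)
        + Complex.I * (m K : ℂ) * (a K : ℂ) * (y1 K + y0 K) / 2 = 0) :
    ((∀ K, a K = 0) →
        ∑ K : ι, m K * ‖y1 K‖ ^ 2 = ∑ K : ι, m K * ‖y0 K‖ ^ 2) ∧
    ((∀ K, 0 ≤ a K) →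
        ∑ K : ι, m K * ‖y1 K‖ ^ 2 ≤ ∑ K : ι, m K * ‖y0 K‖ ^ 2) := by
  set w : ι → ℂ := fun K => y1 K + y0 K with hw
  -- the antisymmetric interaction terms
  set f : ι → ι → ℝ := fun K L =>
    ((starRingEnd ℂ (w K)) * ((T K L : ℂ) * ((y1 L + y0 L) / 2 - (y1 K + y0 K) / 2))).im
    with hf
  -- per-cell identity from the scheme, multiplied by conj (w K) and taking imaginary part
  have hcell : ∀ K : ι,
      m K * (‖y1 K‖ ^ 2 - ‖y0 K‖ ^ 2) / Δt
        + (∑ L : ι, f K L)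
        + m K * a K * ‖w K‖ ^ 2 / 2 = 0 := by
    intro K
    have h0 := congrArg (fun z => ((starRingEnd ℂ (w K)) * z).im) (hscheme K)
    simp only [mul_zero, Complex.zero_im] at h0
    rw [show ∀ A S C D E : ℂ, (starRingEnd ℂ (w K)) * (A + S - C - D + E)
          = (starRingEnd ℂ (w K)) * A + (starRingEnd ℂ (w K)) * S
            - (starRingEnd ℂ (w K)) * C - (starRingEnd ℂ (w K)) * D
            + (starRingEnd ℂ (w K)) * E from fun A S C D E => by ring] at h0
    rw [Finset.mul_sum] at h0
    simp only [Complex.add_im, Complex.sub_im, Complex.im_sum] at h0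
    rw [aux_imA (m K) Δt (y0 K) (y1 K), aux_imB (b K) (w K),
        aux_imC (m K / (2 * p)) _ (w K), aux_imE (m K) (a K) (w K)] at h0
    linarith [h0]
  have hsum : ∑ K : ι, (m K * (‖y1 K‖ ^ 2 - ‖y0 K‖ ^ 2) / Δt
        + (∑ L : ι, f K L)
        + m K * a K * ‖w K‖ ^ 2 / 2) = 0 := by
    simp [hcell]
  -- the interaction terms cancel by antisymmetry
  have hanti : ∀ K L, f K L = - f L K := by
    intro K L
    have := aux_imT (T K L) (w K) (w L)
    simp only [hf]
    rw [hTsymm L K]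
    exact this
  have hS : ∑ K : ι, ∑ L : ι, f K L = 0 := by
    have h1 : (∑ K : ι, ∑ L : ι, f K L) = ∑ K : ι, ∑ L : ι, f L K :=
      Finset.sum_comm
    have h2 : (∑ K : ι, ∑ L : ι, f L K) = ∑ K : ι, ∑ L : ι, -(f K L) :=
      Finset.sum_congr rfl fun K _ => Finset.sum_congr rfl fun L _ => hanti L K
    have h3 : (∑ K : ι, ∑ L : ι, -(f K L)) = - ∑ K : ι, ∑ L : ι, f K L := by
      simp
    linarith [h1.trans (h2.trans h3)]
  rw [Finset.sum_add_distrib, Finset.sum_add_distrib, hS, add_zero] at hsum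
  -- core balance
  have hbal : (∑ K : ι, m K * (‖y1 K‖ ^ 2 - ‖y0 K‖ ^ 2)) / Δt
      = - ∑ K : ι, m K * a K * ‖w K‖ ^ 2 / 2 := by
    rw [Finset.sum_div]
    linarith [hsum]
  have hdiff : ∑ K : ι, m K * (‖y1 K‖ ^ 2 - ‖y0 K‖ ^ 2)
      = ∑ K : ι, m K * ‖y1 K‖ ^ 2 - ∑ K : ι, m K * ‖y0 K‖ ^ 2 := by
    rw [← Finset.sum_sub_distrib]
    exact Finset.sum_congr rfl fun K _ => by ring
  constructor
  · intro ha
    have : (∑ K : ι, m K * (‖y1 K‖ ^ 2 - ‖y0 K‖ ^ 2)) / Δt = 0 := by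
      rw [hbal]
      simp [ha]
    have h2 : ∑ K : ι, m K * (‖y1 K‖ ^ 2 - ‖y0 K‖ ^ 2) = 0 :=
      (div_eq_zero_iff.mp this).resolve_right (by exact_mod_cast hΔt.ne')
    rw [hdiff] at h2
    linarith
  · intro ha
    have hR : - ∑ K : ι, m K * a K * ‖w K‖ ^ 2 / 2 ≤ 0 := by
      have : 0 ≤ ∑ K : ι, m K * a K * ‖w K‖ ^ 2 / 2 :=
        Finset.sum_nonneg fun K _ =>
          div_nonneg (mul_nonneg (mul_nonneg (hm K).le (ha K)) (sq_nonneg _)) (by norm_num)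
      linarith
    have h2 : ∑ K : ι, m K * (‖y1 K‖ ^ 2 - ‖y0 K‖ ^ 2) ≤ 0 := by
      have hle := hbal.le.trans hR
      rcases div_nonpos_iff.mp hle with ⟨_, h⟩ | ⟨h, _⟩
      · linarith
      · exact h
    rw [hdiff] at h2
    linarith
end

section
/- Let ι be a finite index set of mesh cells, m : ι → ℝ with m K > 0 for each K, T : ι → ι → ℝ symmetric with T K L ≥ 0 and T K K = 0, b : ι → ℝ with b K ≥ 0, a : ι → ℝ with a K ≥ 0 for all K, Δt > 0 and p > 0. If (y0, y1) is a scheme step, then for every cell K: |y1 K|² ≤ (Σ_L m L·|y0 L|²)/(m K); in particular the maximum norm max_K |y1 K| of the new iterate is bounded by a constant depending only on the initial discrete mass and on min_K m K. -/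
private lemma imA (r t : ℝ) (u v : ℂ) :
    (Complex.I * (r:ℂ) * (u - v) / (t:ℂ) * (starRingEnd ℂ) (u + v)).im
      = r / t * (Complex.normSq u - Complex.normSq v) := by
  rw [div_eq_mul_inv, ← Complex.ofReal_inv]
  simp [Complex.mul_im, Complex.mul_re, Complex.normSq_apply]
  ring

private lemma imB (c : ℝ) (w u : ℂ) :
    ((c:ℂ) * (w/2 - u/2) * (starRingEnd ℂ) u).im
      = c/2 * (w.im * u.re - w.re * u.im) := by
  rw [show ((2:ℂ)) = ((2:ℝ):ℂ) by norm_num, div_eq_mul_inv, div_eq_mul_inv, ← Complex.ofReal_inv]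
  simp [Complex.mul_im, Complex.mul_re]
  ring

private lemma imC (c : ℝ) (u : ℂ) : ((c:ℂ) * u / 2 * (starRingEnd ℂ) u).im = 0 := by
  rw [show ((2:ℂ)) = ((2:ℝ):ℂ) by norm_num, div_eq_mul_inv, ← Complex.ofReal_inv]
  simp [Complex.mul_im, Complex.mul_re]
  ring

private lemma imD (c d : ℝ) (u : ℂ) : ((c:ℂ) * (d:ℂ) * u * (starRingEnd ℂ) u).im = 0 := by
  simp [Complex.mul_im, Complex.mul_re]
  ring

private lemma imE (r q : ℝ) (u : ℂ) :
    (Complex.I * (r:ℂ) * (q:ℂ) * u / 2 * (starRingEnd ℂ) u).im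
      = r * q / 2 * Complex.normSq u := by
  rw [show ((2:ℂ)) = ((2:ℝ):ℂ) by norm_num, div_eq_mul_inv, ← Complex.ofReal_inv]
  simp [Complex.mul_im, Complex.mul_re, Complex.normSq_apply]
  ring

/-- Uniform (maximum-norm) bound for the new iterate of the finite-volume
scheme for the damped defocusing NLS, in terms of the initial discrete mass
and the cell areas. -/
theorem discrete_linfty_bound {ι : Type*} [Fintype ι]
    (m : ι → ℝ) (hm : ∀ K, 0 < m K)
    (T : ι → ι → ℝ) (hTsymm : ∀ K L, T K L = T L K)
    (hTnonneg : ∀ K L, 0 ≤ T K L) (hTdiag : ∀ K, T K K = 0)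
    (b : ι → ℝ) (hb : ∀ K, 0 ≤ b K)
    (a : ι → ℝ) (ha : ∀ K, 0 ≤ a K)
    (Δt : ℝ) (hΔt : 0 < Δt) (p : ℝ) (hp : 0 < p)
    (y0 y1 : ι → ℂ)
    (hscheme : ∀ K : ι,
      Complex.I * (m K : ℂ) * (y1 K - y0 K) / (Δt : ℂ)
        + ∑ L : ι, (T K L : ℂ) * ((y1 L + y0 L) / 2 - (y1 K + y0 K) / 2)
        - (b K : ℂ) * (y1 K + y0 K) / 2
        - ((m K / (2 * p) : ℝ) : ℂ)
            * (((‖y1 K‖ ^ (2 * p) - ‖y0 K‖ ^ (2 * p)) /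
                (‖y1 K‖ ^ 2 - ‖y0 K‖ ^ 2) : ℝ) : ℂ)
            * (y1 K + y0 K)
        + Complex.I * (m K : ℂ) * (a K : ℂ) * (y1 K + y0 K) / 2 = 0) :
    ∀ K : ι, ‖y1 K‖ ^ 2 ≤ (∑ L : ι, m L * ‖y0 L‖ ^ 2) / m K := by
  classical
  -- the per-pair exchange coefficient
  set f : ι → ι → ℝ := fun K L => T K L / 2 *
    ((y1 L + y0 L).im * (y1 K + y0 K).re - (y1 L + y0 L).re * (y1 K + y0 K).im) with hf
  -- per-cell real identity obtained by multiplying by conj(y1 K + y0 K),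
  -- taking imaginary parts
  have key : ∀ K, m K / Δt * (Complex.normSq (y1 K) - Complex.normSq (y0 K))
      + (∑ L, f K L)
      + m K * a K / 2 * Complex.normSq (y1 K + y0 K) = 0 := by
    intro K
    have h0 := congrArg (fun z => (z * (starRingEnd ℂ) (y1 K + y0 K)).im) (hscheme K)
    simp only [zero_mul, Complex.zero_im, add_mul, sub_mul, Complex.add_im,
      Complex.sub_im, Finset.sum_mul, Complex.im_sum, imA, imB, imC, imD, imE] at h0
    rw [hf]
    simp only [Complex.add_im, Complex.add_re] at h0 ⊢
    ring_nf at h0 ⊢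
    rw [show (∑ x : ι,
        ((y1 K).re * T K x * (y1 x).im * (1 / 2) + (y1 K).re * T K x * (y0 x).im * (1 / 2) +
                    (y0 K).re * T K x * (y1 x).im * (1 / 2) +
                  (y0 K).re * T K x * (y0 x).im * (1 / 2) +
                (y1 K).im * T K x * (y1 x).re * (-1 / 2) +
              (y1 K).im * T K x * (y0 x).re * (-1 / 2) +
            (y0 K).im * T K x * (y1 x).re * (-1 / 2) +
          (y0 K).im * T K x * (y0 x).re * (-1 / 2)))
      = ∑ x : ι,
        (T K x * (y1 x).im * (y1 K).re * (1 / 2) + T K x * (y1 x).im * (y0 K).re * (1 / 2) +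
                    T K x * (y1 K).re * (y0 x).im * (1 / 2) +
                  T K x * (y0 K).re * (y0 x).im * (1 / 2) +
                T K x * (y1 x).re * (y1 K).im * (-1 / 2) +
              T K x * (y1 x).re * (y0 K).im * (-1 / 2) +
            T K x * (y0 x).re * (y1 K).im * (-1 / 2) +
          T K x * (y0 x).re * (y0 K).im * (-1 / 2))
      from Finset.sum_congr rfl fun L _ => by ring]
    linarith [h0]
  -- the exchange term vanishes after summation, by symmetry of T
  have hanti : (∑ K, ∑ L, f K L) = 0 := by
    have h1 : (∑ K, ∑ L, f K L) + (∑ K, ∑ L, f K L) = 0 := by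
      nth_rewrite 2 [Finset.sum_comm]
      rw [← Finset.sum_add_distrib]
      refine Finset.sum_eq_zero fun K _ => ?_
      rw [← Finset.sum_add_distrib]
      refine Finset.sum_eq_zero fun L _ => ?_
      rw [hf]
      simp only
      rw [hTsymm L K]
      ring
    linarith
  -- mass dissipation
  have hmass : ∑ L, m L * Complex.normSq (y1 L) ≤ ∑ L, m L * Complex.normSq (y0 L) := by
    have H : ∑ K, (m K / Δt * (Complex.normSq (y1 K) - Complex.normSq (y0 K))
        + (∑ L, f K L)
        + m K * a K / 2 * Complex.normSq (y1 K + y0 K)) = 0 :=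
      Finset.sum_eq_zero fun K _ => key K
    rw [Finset.sum_add_distrib, Finset.sum_add_distrib, hanti] at H
    have hpos : 0 ≤ ∑ K, m K * a K / 2 * Complex.normSq (y1 K + y0 K) :=
      Finset.sum_nonneg fun K _ =>
        mul_nonneg (div_nonneg (mul_nonneg (hm K).le (ha K)) (by norm_num))
          (Complex.normSq_nonneg _)
    have h1 : ∑ K, m K / Δt * (Complex.normSq (y1 K) - Complex.normSq (y0 K)) ≤ 0 := by
      linarith
    have h2 : ∑ K, m K / Δt * (Complex.normSq (y1 K) - Complex.normSq (y0 K))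
        = (∑ L, m L * Complex.normSq (y1 L) - ∑ L, m L * Complex.normSq (y0 L)) / Δt := by
      rw [eq_div_iff hΔt.ne', ← Finset.sum_sub_distrib, Finset.sum_mul]
      refine Finset.sum_congr rfl fun K _ => ?_
      field_simp
    rw [h2] at h1
    have h4 := mul_nonpos_of_nonpos_of_nonneg h1 hΔt.le
    rw [div_mul_cancel₀ _ hΔt.ne'] at h4
    linarith
  intro K
  rw [le_div_iff₀ (hm K)]
  simp only [Complex.sq_norm]
  calc Complex.normSq (y1 K) * m K = m K * Complex.normSq (y1 K) := mul_comm _ _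
    _ ≤ ∑ L, m L * Complex.normSq (y1 L) :=
        Finset.single_le_sum (f := fun L => m L * Complex.normSq (y1 L))
          (fun L _ => mul_nonneg (hm L).le (Complex.normSq_nonneg _)) (Finset.mem_univ K)
    _ ≤ ∑ L, m L * Complex.normSq (y0 L) := hmass
end

section
/- Let ι be a finite index set of mesh cells, m : ι → ℝ with m K > 0 for each K, T : ι → ι → ℝ symmetric with T K L ≥ 0 and T K K = 0, b : ι → ℝ with b K ≥ 0, Δt > 0 and p > 0. If (y0, y1) is a scheme step with zero damping (a K = 0 for all K), then the discrete H¹-level energy is conserved: E₁(y1) = E₁(y0), where E₁(y) = (1/4)·Σ_K Σ_L T K L·|y L − y K|² + (1/2)·Σ_K b K·|y K|² + Σ_K (m K/(2p))·|y K|^(2p). -/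
private lemma re_aux (a b : ℂ) :
    ((a + b) * (starRingEnd ℂ) (a - b)).re = ‖a‖ ^ 2 - ‖b‖ ^ 2 := by
  simp only [Complex.sq_norm, Complex.normSq_apply, Complex.mul_re, Complex.add_re, Complex.add_im,
    Complex.sub_re, Complex.sub_im, Complex.conj_re, Complex.conj_im]
  ring

private lemma re_aux2 (a b a' b' : ℂ) :
    (((a + b) / 2 - (a' + b') / 2) * (starRingEnd ℂ) (a' - b')).re
      + (((a' + b') / 2 - (a + b) / 2) * (starRingEnd ℂ) (a - b)).re
    = -(1 / 2) * (‖a - a'‖ ^ 2 - ‖b - b'‖ ^ 2) := by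
  have h : ((a + b) / 2 - (a' + b') / 2) * (starRingEnd ℂ) (a' - b')
      + ((a' + b') / 2 - (a + b) / 2) * (starRingEnd ℂ) (a - b)
      = ((-(1/2) : ℝ) : ℂ) * (((a - a') + (b - b')) * (starRingEnd ℂ) ((a - a') - (b - b'))) := by
    simp only [map_sub, map_add]
    push_cast
    ring
  have := congrArg Complex.re h
  rw [Complex.add_re] at this
  rw [this, Complex.re_ofReal_mul, re_aux]

/-- Conservation of the discrete `H¹`-level energy for one step of the
finite-volume scheme for the defocusing NLS with zero damping. -/
theorem discrete_energy_conservation {ι : Type*} [Fintype ι]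
    (m : ι → ℝ) (hm : ∀ K, 0 < m K)
    (T : ι → ι → ℝ) (hTsymm : ∀ K L, T K L = T L K)
    (hTnonneg : ∀ K L, 0 ≤ T K L) (hTdiag : ∀ K, T K K = 0)
    (b : ι → ℝ) (hb : ∀ K, 0 ≤ b K)
    (Δt : ℝ) (hΔt : 0 < Δt) (p : ℝ) (hp : 0 < p)
    (y0 y1 : ι → ℂ)
    (hscheme : ∀ K : ι,
      Complex.I * (m K : ℂ) * (y1 K - y0 K) / (Δt : ℂ)
        + ∑ L : ι, (T K L : ℂ) * ((y1 L + y0 L) / 2 - (y1 K + y0 K) / 2)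
        - (b K : ℂ) * (y1 K + y0 K) / 2
        - ((m K / (2 * p) : ℝ) : ℂ)
            * (((‖y1 K‖ ^ (2 * p) - ‖y0 K‖ ^ (2 * p)) /
                (‖y1 K‖ ^ 2 - ‖y0 K‖ ^ 2) : ℝ) : ℂ)
            * (y1 K + y0 K) = 0) :
    (1 / 4) * ∑ K : ι, ∑ L : ι, T K L * ‖y1 L - y1 K‖ ^ 2
      + (1 / 2) * ∑ K : ι, b K * ‖y1 K‖ ^ 2
      + ∑ K : ι, (m K / (2 * p)) * ‖y1 K‖ ^ (2 * p)
    = (1 / 4) * ∑ K : ι, ∑ L : ι, T K L * ‖y0 L - y0 K‖ ^ 2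
      + (1 / 2) * ∑ K : ι, b K * ‖y0 K‖ ^ 2
      + ∑ K : ι, (m K / (2 * p)) * ‖y0 K‖ ^ (2 * p) := by
  classical
  -- per-cell identity obtained by multiplying the scheme by `conj (y1 K - y0 K)`
  -- and taking real parts
  have key : ∀ K : ι,
      (∑ L : ι, T K L *
        (((y1 L + y0 L) / 2 - (y1 K + y0 K) / 2) * (starRingEnd ℂ) (y1 K - y0 K)).re)
      = b K / 2 * (‖y1 K‖ ^ 2 - ‖y0 K‖ ^ 2)
        + m K / (2 * p) * (‖y1 K‖ ^ (2 * p) - ‖y0 K‖ ^ (2 * p)) := by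
    intro K
    have h := congrArg (fun z : ℂ => (z * (starRingEnd ℂ) (y1 K - y0 K)).re) (hscheme K)
    simp only [zero_mul, Complex.zero_re] at h
    rw [sub_mul, sub_mul, add_mul, Complex.sub_re, Complex.sub_re, Complex.add_re] at h
    -- the time-derivative term has zero real part
    have hA : (Complex.I * (m K : ℂ) * (y1 K - y0 K) / (Δt : ℂ)
        * (starRingEnd ℂ) (y1 K - y0 K)).re = 0 := by
      have e : Complex.I * (m K : ℂ) * (y1 K - y0 K) / (Δt : ℂ)
          * (starRingEnd ℂ) (y1 K - y0 K)
          = (m K : ℂ) * (Δt : ℂ)⁻¹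
            * ((y1 K - y0 K) * (starRingEnd ℂ) (y1 K - y0 K)) * Complex.I := by
        field_simp
      rw [e, Complex.mul_conj, ← Complex.ofReal_inv, ← Complex.ofReal_mul,
        ← Complex.ofReal_mul]
      simp [Complex.mul_I_re]
    -- the flux term
    have hS : ((∑ L : ι, (T K L : ℂ) * ((y1 L + y0 L) / 2 - (y1 K + y0 K) / 2))
        * (starRingEnd ℂ) (y1 K - y0 K)).re
        = ∑ L : ι, T K L *
          (((y1 L + y0 L) / 2 - (y1 K + y0 K) / 2) * (starRingEnd ℂ) (y1 K - y0 K)).re := by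
      rw [Finset.sum_mul, Complex.re_sum]
      exact Finset.sum_congr rfl fun L _ => by
        rw [mul_assoc, Complex.re_ofReal_mul]
    -- the boundary term
    have hB : ((b K : ℂ) * (y1 K + y0 K) / 2 * (starRingEnd ℂ) (y1 K - y0 K)).re
        = b K / 2 * (‖y1 K‖ ^ 2 - ‖y0 K‖ ^ 2) := by
      have e : (b K : ℂ) * (y1 K + y0 K) / 2 * (starRingEnd ℂ) (y1 K - y0 K)
          = ((b K / 2 : ℝ) : ℂ) * ((y1 K + y0 K) * (starRingEnd ℂ) (y1 K - y0 K)) := by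
        push_cast; ring
      rw [e, Complex.re_ofReal_mul, re_aux]
    -- the nonlinear term
    have hC : (((m K / (2 * p) : ℝ) : ℂ)
        * (((‖y1 K‖ ^ (2 * p) - ‖y0 K‖ ^ (2 * p)) /
            (‖y1 K‖ ^ 2 - ‖y0 K‖ ^ 2) : ℝ) : ℂ)
        * (y1 K + y0 K) * (starRingEnd ℂ) (y1 K - y0 K)).re
        = m K / (2 * p) * (‖y1 K‖ ^ (2 * p) - ‖y0 K‖ ^ (2 * p)) := by
      have e : ((m K / (2 * p) : ℝ) : ℂ)
          * (((‖y1 K‖ ^ (2 * p) - ‖y0 K‖ ^ (2 * p)) /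
              (‖y1 K‖ ^ 2 - ‖y0 K‖ ^ 2) : ℝ) : ℂ)
          * (y1 K + y0 K) * (starRingEnd ℂ) (y1 K - y0 K)
          = ((m K / (2 * p) * ((‖y1 K‖ ^ (2 * p) - ‖y0 K‖ ^ (2 * p)) /
              (‖y1 K‖ ^ 2 - ‖y0 K‖ ^ 2)) : ℝ) : ℂ)
            * ((y1 K + y0 K) * (starRingEnd ℂ) (y1 K - y0 K)) := by
        push_cast; ring
      rw [e, Complex.re_ofReal_mul, re_aux]
      by_cases hd : ‖y1 K‖ ^ 2 - ‖y0 K‖ ^ 2 = 0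
      · have habs : ‖y1 K‖ = ‖y0 K‖ := by
          have h1 : ‖y1 K‖ ^ 2 = ‖y0 K‖ ^ 2 := by linarith
          have := Real.sqrt_sq (norm_nonneg (y1 K))
          have := Real.sqrt_sq (norm_nonneg (y0 K))
          nlinarith [Real.sqrt_sq (norm_nonneg (y1 K)),
            Real.sqrt_sq (norm_nonneg (y0 K)), congrArg Real.sqrt h1]
        rw [habs]
        simp
      · rw [mul_assoc, div_mul_cancel₀ _ hd]
    rw [hA, hS, hB, hC] at h
    linarith
  -- sum the per-cell identities over K
  have hsum : (∑ K : ι, ∑ L : ι, T K L *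
        (((y1 L + y0 L) / 2 - (y1 K + y0 K) / 2) * (starRingEnd ℂ) (y1 K - y0 K)).re)
      = ∑ K : ι, (b K / 2 * (‖y1 K‖ ^ 2 - ‖y0 K‖ ^ 2)
        + m K / (2 * p) * (‖y1 K‖ ^ (2 * p) - ‖y0 K‖ ^ (2 * p))) :=
    Finset.sum_congr rfl fun K _ => key K
  -- symmetrize the left-hand side
  set G : ι → ι → ℝ := fun K L => T K L *
    (((y1 L + y0 L) / 2 - (y1 K + y0 K) / 2) * (starRingEnd ℂ) (y1 K - y0 K)).re with hG
  have hswap : (∑ K : ι, ∑ L : ι, G K L) = ∑ K : ι, ∑ L : ι, G L K := Finset.sum_comm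
  have hpair : ∀ K L, G K L + G L K
      = -(1 / 2) * (T K L * ‖y1 L - y1 K‖ ^ 2
          - T K L * ‖y0 L - y0 K‖ ^ 2) := by
    intro K L
    have := re_aux2 (y1 L) (y0 L) (y1 K) (y0 K)
    simp only [hG]
    rw [hTsymm K L]
    linear_combination T L K * this
  have hdouble : (∑ K : ι, ∑ L : ι, G K L) + (∑ K : ι, ∑ L : ι, G K L)
      = -(1 / 2) * ((∑ K : ι, ∑ L : ι, T K L * ‖y1 L - y1 K‖ ^ 2)
          - ∑ K : ι, ∑ L : ι, T K L * ‖y0 L - y0 K‖ ^ 2) := by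
    nth_rewrite 2 [hswap]
    rw [← Finset.sum_add_distrib]
    simp_rw [← Finset.sum_add_distrib, hpair]
    rw [← Finset.sum_sub_distrib]
    simp_rw [← Finset.sum_sub_distrib]
    rw [Finset.mul_sum]
    exact Finset.sum_congr rfl fun K _ => by rw [Finset.mul_sum]
  -- expand the right-hand side sums
  have hrhs : (∑ K : ι, (b K / 2 * (‖y1 K‖ ^ 2 - ‖y0 K‖ ^ 2)
        + m K / (2 * p) * (‖y1 K‖ ^ (2 * p) - ‖y0 K‖ ^ (2 * p))))
      = (1 / 2) * (∑ K : ι, b K * ‖y1 K‖ ^ 2)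
        - (1 / 2) * (∑ K : ι, b K * ‖y0 K‖ ^ 2)
        + ((∑ K : ι, m K / (2 * p) * ‖y1 K‖ ^ (2 * p))
          - ∑ K : ι, m K / (2 * p) * ‖y0 K‖ ^ (2 * p)) := by
    rw [Finset.mul_sum, Finset.mul_sum, ← Finset.sum_sub_distrib, ← Finset.sum_sub_distrib,
      ← Finset.sum_add_distrib]
    exact Finset.sum_congr rfl fun K _ => by ring
  rw [hsum, hrhs] at hdouble
  linarith [hdouble]
end
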